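/- Fix κ ∈ (8/3,8) and set h = (6−κ)/(2κ). The function Φ(ξ,y,z) = (z−y)^{2/κ} (y−ξ)^{1−8/κ} (z−ξ)^{1−8/κ}, defined on the open set {(ξ,y,z) ∈ ℝ³ : ξ < y < z}, satisfies the third-order BPZ partial differential equation ∂³Φ/∂ξ³ − (16/κ)·[ (h/(y−ξ)²)·(∂Φ/∂ξ) − (1/(y−ξ))·∂²Φ/∂y∂ξ + (h/(z−ξ)²)·(∂Φ/∂ξ) − (1/(z−ξ))·∂²Φ/∂z∂ξ ] + (8(8−κ)/κ²)·[ (2h/(y−ξ)³)·Φ − (1/(y−ξ)²)·(∂Φ/∂y) + (2h/(z−ξ)³)·Φ − (1/(z−ξ)²)·(∂Φ/∂z) ] = 0 at every point with ξ < y < z. -/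

import Mathlib

/-- The fused three-point function `Φ(ξ,y,z) = (z−y)^{2/κ}(y−ξ)^{1−8/κ}(z−ξ)^{1−8/κ}`. -/
noncomputable def Phi (κ ξ y z : ℝ) : ℝ :=
  (z - y) ^ (2/κ) * (y - ξ) ^ (1 - 8/κ) * (z - ξ) ^ (1 - 8/κ)

lemma hd_sub (c p t : ℝ) (h : t < c) :
    HasDerivAt (fun s : ℝ => (c - s) ^ p) (-(p * (c - t) ^ (p - 1))) t := by
  have h1 : HasDerivAt (fun s : ℝ => c - s) (-1) t := (hasDerivAt_id t).const_sub c
  have h2 := h1.rpow_const (p := p) (Or.inl (sub_ne_zero.2 h.ne'))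
  convert h2 using 1; ring

lemma hd_sub' (c p t : ℝ) (h : c < t) :
    HasDerivAt (fun s : ℝ => (s - c) ^ p) (p * (t - c) ^ (p - 1)) t := by
  have h1 : HasDerivAt (fun s : ℝ => s - c) 1 t := (hasDerivAt_id t).sub_const c
  have h2 := h1.rpow_const (p := p) (Or.inl (sub_ne_zero.2 h.ne'))
  convert h2 using 1; ring

lemma L1 (a b y z t : ℝ) (hty : t < y) (htz : t < z) :
    HasDerivAt (fun s => (z - y) ^ a * (y - s) ^ b * (z - s) ^ b)
      ((z - y) ^ a * (-(b * (y - t) ^ (b - 1) * (z - t) ^ b +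
        b * (y - t) ^ b * (z - t) ^ (b - 1)))) t := by
  have h := ((hd_sub y b t hty).const_mul ((z - y) ^ a)).mul (hd_sub z b t htz)
  refine h.congr_deriv ?_; ring

lemma L2 (a b y z t : ℝ) (hty : t < y) (htz : t < z) :
    HasDerivAt (fun s => (z - y) ^ a * (-(b * (y - s) ^ (b - 1) * (z - s) ^ b +
        b * (y - s) ^ b * (z - s) ^ (b - 1))))
      ((z - y) ^ a * (b * (b - 1) * (y - t) ^ (b - 2) * (z - t) ^ b
        + 2 * b * b * (y - t) ^ (b - 1) * (z - t) ^ (b - 1)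
        + b * (b - 1) * (y - t) ^ b * (z - t) ^ (b - 2))) t := by
  have h1 := (hd_sub y (b - 1) t hty).mul (hd_sub z b t htz)
  have h2 := (hd_sub y b t hty).mul (hd_sub z (b - 1) t htz)
  have h := (((h1.const_mul b).add (h2.const_mul b)).neg).const_mul ((z - y) ^ a)
  have hfun : (fun s => (z - y) ^ a * (-(b * (y - s) ^ (b - 1) * (z - s) ^ b +
      b * (y - s) ^ b * (z - s) ^ (b - 1))))
      = (fun s => (z - y) ^ a * (-(b * ((y - s) ^ (b - 1) * (z - s) ^ b) +
        b * ((y - s) ^ b * (z - s) ^ (b - 1))))) := by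
    funext s; ring
  rw [hfun]
  refine h.congr_deriv ?_
  rw [show b - 1 - 1 = b - 2 by ring]
  ring

lemma L3 (a b y z t : ℝ) (hty : t < y) (htz : t < z) :
    HasDerivAt (fun s => (z - y) ^ a * (b * (b - 1) * (y - s) ^ (b - 2) * (z - s) ^ b
        + 2 * b * b * (y - s) ^ (b - 1) * (z - s) ^ (b - 1)
        + b * (b - 1) * (y - s) ^ b * (z - s) ^ (b - 2)))
      ((z - y) ^ a * (-(b * (b - 1) * (b - 2) * (y - t) ^ (b - 3) * (z - t) ^ b
        + 3 * b * b * (b - 1) * (y - t) ^ (b - 2) * (z - t) ^ (b - 1)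
        + 3 * b * b * (b - 1) * (y - t) ^ (b - 1) * (z - t) ^ (b - 2)
        + b * (b - 1) * (b - 2) * (y - t) ^ b * (z - t) ^ (b - 3)))) t := by
  have h1 := (hd_sub y (b - 2) t hty).mul (hd_sub z b t htz)
  have h2 := (hd_sub y (b - 1) t hty).mul (hd_sub z (b - 1) t htz)
  have h3 := (hd_sub y b t hty).mul (hd_sub z (b - 2) t htz)
  have h := (((h1.const_mul (b * (b - 1))).add (h2.const_mul (2 * b * b))).add
      (h3.const_mul (b * (b - 1)))).const_mul ((z - y) ^ a)
  have hfun : (fun s => (z - y) ^ a * (b * (b - 1) * (y - s) ^ (b - 2) * (z - s) ^ b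
        + 2 * b * b * (y - s) ^ (b - 1) * (z - s) ^ (b - 1)
        + b * (b - 1) * (y - s) ^ b * (z - s) ^ (b - 2)))
      = (fun s => (z - y) ^ a * (b * (b - 1) * ((y - s) ^ (b - 2) * (z - s) ^ b)
        + 2 * b * b * ((y - s) ^ (b - 1) * (z - s) ^ (b - 1))
        + b * (b - 1) * ((y - s) ^ b * (z - s) ^ (b - 2)))) := by
    funext s; ring
  rw [hfun]
  refine h.congr_deriv ?_
  rw [show b - 2 - 1 = b - 3 by ring, show b - 1 - 1 = b - 2 by ring]
  ring

lemma L4 (a b ξ y z : ℝ) (hξy : ξ < y) (hyz : y < z) :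
    HasDerivAt (fun s => (z - s) ^ a * (-(b * (s - ξ) ^ (b - 1) * (z - ξ) ^ b +
        b * (s - ξ) ^ b * (z - ξ) ^ (b - 1))))
      (-(b * ((-a * (z - y) ^ (a - 1) * (y - ξ) ^ (b - 1)
            + (b - 1) * (z - y) ^ a * (y - ξ) ^ (b - 2)) * (z - ξ) ^ b
          + (-a * (z - y) ^ (a - 1) * (y - ξ) ^ b
            + b * (z - y) ^ a * (y - ξ) ^ (b - 1)) * (z - ξ) ^ (b - 1)))) y := by
  have k1 := (hd_sub z a y hyz).mul (hd_sub' ξ (b - 1) y hξy)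
  have k2 := (hd_sub z a y hyz).mul (hd_sub' ξ b y hξy)
  have h := ((k1.mul_const (b * (z - ξ) ^ b)).add (k2.mul_const (b * (z - ξ) ^ (b - 1)))).neg
  have hfun : (fun s => (z - s) ^ a * (-(b * (s - ξ) ^ (b - 1) * (z - ξ) ^ b +
        b * (s - ξ) ^ b * (z - ξ) ^ (b - 1))))
      = (fun s => -((z - s) ^ a * (s - ξ) ^ (b - 1) * (b * (z - ξ) ^ b)
          + (z - s) ^ a * (s - ξ) ^ b * (b * (z - ξ) ^ (b - 1)))) := by
    funext s; ring
  rw [hfun]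
  refine h.congr_deriv ?_
  rw [show b - 1 - 1 = b - 2 by ring]
  ring

lemma L5 (a b ξ y z : ℝ) (hξz : ξ < z) (hyz : y < z) :
    HasDerivAt (fun s => (s - y) ^ a * (-(b * (y - ξ) ^ (b - 1) * (s - ξ) ^ b +
        b * (y - ξ) ^ b * (s - ξ) ^ (b - 1))))
      (-(b * ((a * (z - y) ^ (a - 1) * (z - ξ) ^ b
            + b * (z - y) ^ a * (z - ξ) ^ (b - 1)) * (y - ξ) ^ (b - 1)
          + (a * (z - y) ^ (a - 1) * (z - ξ) ^ (b - 1)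
            + (b - 1) * (z - y) ^ a * (z - ξ) ^ (b - 2)) * (y - ξ) ^ b))) z := by
  have k1 := (hd_sub' y a z hyz).mul (hd_sub' ξ b z hξz)
  have k2 := (hd_sub' y a z hyz).mul (hd_sub' ξ (b - 1) z hξz)
  have h := ((k1.mul_const (b * (y - ξ) ^ (b - 1))).add (k2.mul_const (b * (y - ξ) ^ b))).neg
  have hfun : (fun s => (s - y) ^ a * (-(b * (y - ξ) ^ (b - 1) * (s - ξ) ^ b +
        b * (y - ξ) ^ b * (s - ξ) ^ (b - 1))))
      = (fun s => -((s - y) ^ a * (s - ξ) ^ b * (b * (y - ξ) ^ (b - 1))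
          + (s - y) ^ a * (s - ξ) ^ (b - 1) * (b * (y - ξ) ^ b))) := by
    funext s; ring
  rw [hfun]
  refine h.congr_deriv ?_
  rw [show b - 1 - 1 = b - 2 by ring]
  ring

lemma L6 (a b ξ y z : ℝ) (hξy : ξ < y) (hyz : y < z) :
    HasDerivAt (fun s => (z - s) ^ a * (s - ξ) ^ b * (z - ξ) ^ b)
      ((-a * (z - y) ^ (a - 1) * (y - ξ) ^ b
        + b * (z - y) ^ a * (y - ξ) ^ (b - 1)) * (z - ξ) ^ b) y := by
  have h := ((hd_sub z a y hyz).mul (hd_sub' ξ b y hξy)).mul_const ((z - ξ) ^ b)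
  refine h.congr_deriv ?_; ring

lemma L7 (a b ξ y z : ℝ) (hξz : ξ < z) (hyz : y < z) :
    HasDerivAt (fun s => (s - y) ^ a * (y - ξ) ^ b * (s - ξ) ^ b)
      ((a * (z - y) ^ (a - 1) * (z - ξ) ^ b
        + b * (z - y) ^ a * (z - ξ) ^ (b - 1)) * (y - ξ) ^ b) z := by
  have h := ((hd_sub' y a z hyz).mul_const ((y - ξ) ^ b)).mul (hd_sub' ξ b z hξz)
  refine h.congr_deriv ?_; ring

lemma off1 {x : ℝ} (hx : 0 < x) (p : ℝ) : x ^ (p - 1) = x ^ p / x := by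
  rw [Real.rpow_sub hx, Real.rpow_one]

lemma off2 {x : ℝ} (hx : 0 < x) (p : ℝ) : x ^ (p - 2) = x ^ p / x ^ 2 := by
  rw [show (2:ℝ) = ((2:ℕ):ℝ) by norm_num, Real.rpow_sub hx, Real.rpow_natCast]

lemma off3 {x : ℝ} (hx : 0 < x) (p : ℝ) : x ^ (p - 3) = x ^ p / x ^ 3 := by
  rw [show (3:ℝ) = ((3:ℕ):ℝ) by norm_num, Real.rpow_sub hx, Real.rpow_natCast]

set_option maxHeartbeats 1600000 in
lemma alg_key (κ u v : ℝ) (hκ : κ ≠ 0) (hu : u ≠ 0) (hv : v ≠ 0) (hw : v - u ≠ 0) :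
    (1:ℝ) *
          -((1 - 8 / κ) * (1 - 8 / κ - 1) * (1 - 8 / κ - 2) * (1 / u ^ 3) * 1 +
                  3 * (1 - 8 / κ) * (1 - 8 / κ) * (1 - 8 / κ - 1) * (1 / u ^ 2) * (1 / v) +
                3 * (1 - 8 / κ) * (1 - 8 / κ) * (1 - 8 / κ - 1) * (1 / u) * (1 / v ^ 2) +
              (1 - 8 / κ) * (1 - 8 / κ - 1) * (1 - 8 / κ - 2) * 1 * (1 / v ^ 3)) -
        16 / κ *
          ((6 - κ) / (2 * κ) / u ^ 2 * (1 * -((1 - 8 / κ) * (1 / u) * 1 + (1 - 8 / κ) * 1 * (1 / v))) -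
                1 / u *
                  -((1 - 8 / κ) *
                      ((-(2 / κ) * (1 / (v - u)) * (1 / u) + (1 - 8 / κ - 1) * 1 * (1 / u ^ 2)) * 1 +
                        (-(2 / κ) * (1 / (v - u)) * 1 + (1 - 8 / κ) * 1 * (1 / u)) * (1 / v))) +
              (6 - κ) / (2 * κ) / v ^ 2 * (1 * -((1 - 8 / κ) * (1 / u) * 1 + (1 - 8 / κ) * 1 * (1 / v))) -
            1 / v *
              -((1 - 8 / κ) *
                  ((2 / κ * (1 / (v - u)) * 1 + (1 - 8 / κ) * 1 * (1 / v)) * (1 / u) +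
                    (2 / κ * (1 / (v - u)) * (1 / v) + (1 - 8 / κ - 1) * 1 * (1 / v ^ 2)) * 1))) +
      8 * (8 - κ) / κ ^ 2 *
        (2 * ((6 - κ) / (2 * κ)) / u ^ 3 * (1 * 1 * 1) -
              1 / u ^ 2 * ((-(2 / κ) * (1 / (v - u)) * 1 + (1 - 8 / κ) * 1 * (1 / u)) * 1) +
            2 * ((6 - κ) / (2 * κ)) / v ^ 3 * (1 * 1 * 1) -
          1 / v ^ 2 * ((2 / κ * (1 / (v - u)) * 1 + (1 - 8 / κ) * 1 * (1 / v)) * 1)) =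
    0 := by
  field_simp
  ring

set_option maxHeartbeats 2000000 in

/-- for `κ ∈ (8/3,8)` and `h = (6−κ)/(2κ)`, the function `Φ` satisfies
the third-order BPZ PDE `∂³_ξΦ − (16/κ)𝓛₋₂∂_ξΦ + (8(8−κ)/κ²)𝓛₋₃Φ = 0` at every point
with `ξ < y < z`. -/
theorem statement6 (κ : ℝ) (hκ : κ ∈ Set.Ioo (8/3 : ℝ) 8)
    (ξ y z : ℝ) (hξy : ξ < y) (hyz : y < z) :
    deriv^[3] (fun t => Phi κ t y z) ξ
      - (16/κ) *
        (((6 - κ) / (2 * κ) / (y - ξ)^2) * deriv (fun t => Phi κ t y z) ξ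
          - (1 / (y - ξ)) * deriv (fun s => deriv (fun t => Phi κ t s z) ξ) y
          + ((6 - κ) / (2 * κ) / (z - ξ)^2) * deriv (fun t => Phi κ t y z) ξ
          - (1 / (z - ξ)) * deriv (fun s => deriv (fun t => Phi κ t y s) ξ) z)
      + (8 * (8 - κ) / κ^2) *
        ((2 * ((6 - κ) / (2 * κ)) / (y - ξ)^3) * Phi κ ξ y z
          - (1 / (y - ξ)^2) * deriv (fun s => Phi κ ξ s z) y
          + (2 * ((6 - κ) / (2 * κ)) / (z - ξ)^3) * Phi κ ξ y z
          - (1 / (z - ξ)^2) * deriv (fun s => Phi κ ξ y s) z) = 0 := by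
  have hκ0 : (0:ℝ) < κ := lt_trans (by norm_num) hκ.1
  have hκne : κ ≠ 0 := hκ0.ne'
  have hξz : ξ < z := hξy.trans hyz
  have hu : (0:ℝ) < y - ξ := sub_pos.2 hξy
  have hv : (0:ℝ) < z - ξ := sub_pos.2 hξz
  have hw : (0:ℝ) < z - y := sub_pos.2 hyz
  set a : ℝ := 2/κ with ha
  set b : ℝ := 1 - 8/κ with hb
  -- first derivative in ξ on Iio y
  have e0 : Set.EqOn (deriv (fun t => Phi κ t y z))
      (fun t => (z - y) ^ a * (-(b * (y - t) ^ (b - 1) * (z - t) ^ b +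
        b * (y - t) ^ b * (z - t) ^ (b - 1)))) (Set.Iio y) := by
    intro t ht
    have heq : (fun t => Phi κ t y z) =ᶠ[nhds t]
        (fun s => (z - y) ^ a * (y - s) ^ b * (z - s) ^ b) :=
      Filter.Eventually.of_forall fun s => by simp [Phi, ha, hb]
    exact ((L1 a b y z t ht (ht.trans hyz)).congr_of_eventuallyEq heq).deriv
  have e1 : Set.EqOn (deriv (deriv (fun t => Phi κ t y z)))
      (fun t => (z - y) ^ a * (b * (b - 1) * (y - t) ^ (b - 2) * (z - t) ^ b
        + 2 * b * b * (y - t) ^ (b - 1) * (z - t) ^ (b - 1)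
        + b * (b - 1) * (y - t) ^ b * (z - t) ^ (b - 2))) (Set.Iio y) := by
    intro t ht
    have heq : deriv (fun t => Phi κ t y z) =ᶠ[nhds t]
        (fun t => (z - y) ^ a * (-(b * (y - t) ^ (b - 1) * (z - t) ^ b +
          b * (y - t) ^ b * (z - t) ^ (b - 1)))) :=
      Filter.eventuallyEq_of_mem (isOpen_Iio.mem_nhds ht) e0
    rw [heq.deriv_eq]
    exact (L2 a b y z t ht (ht.trans hyz)).deriv
  have e2 : deriv^[3] (fun t => Phi κ t y z) ξ
      = (z - y) ^ a * (-(b * (b - 1) * (b - 2) * (y - ξ) ^ (b - 3) * (z - ξ) ^ b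
        + 3 * b * b * (b - 1) * (y - ξ) ^ (b - 2) * (z - ξ) ^ (b - 1)
        + 3 * b * b * (b - 1) * (y - ξ) ^ (b - 1) * (z - ξ) ^ (b - 2)
        + b * (b - 1) * (b - 2) * (y - ξ) ^ b * (z - ξ) ^ (b - 3))) := by
    show deriv (deriv (deriv (fun t => Phi κ t y z))) ξ = _
    have heq : deriv (deriv (fun t => Phi κ t y z)) =ᶠ[nhds ξ]
        (fun t => (z - y) ^ a * (b * (b - 1) * (y - t) ^ (b - 2) * (z - t) ^ b
          + 2 * b * b * (y - t) ^ (b - 1) * (z - t) ^ (b - 1)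
          + b * (b - 1) * (y - t) ^ b * (z - t) ^ (b - 2))) :=
      Filter.eventuallyEq_of_mem (isOpen_Iio.mem_nhds hξy) e1
    rw [heq.deriv_eq]
    exact (L3 a b y z ξ hξy hξz).deriv
  -- mixed derivative in y
  have my : deriv (fun s => deriv (fun t => Phi κ t s z) ξ) y
      = -(b * ((-a * (z - y) ^ (a - 1) * (y - ξ) ^ (b - 1)
            + (b - 1) * (z - y) ^ a * (y - ξ) ^ (b - 2)) * (z - ξ) ^ b
          + (-a * (z - y) ^ (a - 1) * (y - ξ) ^ b
            + b * (z - y) ^ a * (y - ξ) ^ (b - 1)) * (z - ξ) ^ (b - 1))) := by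
    have m1 : Set.EqOn (fun s => deriv (fun t => Phi κ t s z) ξ)
        (fun s => (z - s) ^ a * (-(b * (s - ξ) ^ (b - 1) * (z - ξ) ^ b +
          b * (s - ξ) ^ b * (z - ξ) ^ (b - 1)))) (Set.Ioo ξ z) := by
      intro s hs
      have heq : (fun t => Phi κ t s z) =ᶠ[nhds ξ]
          (fun t => (z - s) ^ a * (s - t) ^ b * (z - t) ^ b) :=
        Filter.Eventually.of_forall fun t => by simp [Phi, ha, hb]
      exact ((L1 a b s z ξ hs.1 hξz).congr_of_eventuallyEq heq).deriv
    have heq : (fun s => deriv (fun t => Phi κ t s z) ξ) =ᶠ[nhds y]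
        (fun s => (z - s) ^ a * (-(b * (s - ξ) ^ (b - 1) * (z - ξ) ^ b +
          b * (s - ξ) ^ b * (z - ξ) ^ (b - 1)))) :=
      Filter.eventuallyEq_of_mem (isOpen_Ioo.mem_nhds ⟨hξy, hyz⟩) m1
    rw [heq.deriv_eq]
    exact (L4 a b ξ y z hξy hyz).deriv
  -- mixed derivative in z
  have mz : deriv (fun s => deriv (fun t => Phi κ t y s) ξ) z
      = -(b * ((a * (z - y) ^ (a - 1) * (z - ξ) ^ b
            + b * (z - y) ^ a * (z - ξ) ^ (b - 1)) * (y - ξ) ^ (b - 1)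
          + (a * (z - y) ^ (a - 1) * (z - ξ) ^ (b - 1)
            + (b - 1) * (z - y) ^ a * (z - ξ) ^ (b - 2)) * (y - ξ) ^ b)) := by
    have m1 : Set.EqOn (fun s => deriv (fun t => Phi κ t y s) ξ)
        (fun s => (s - y) ^ a * (-(b * (y - ξ) ^ (b - 1) * (s - ξ) ^ b +
          b * (y - ξ) ^ b * (s - ξ) ^ (b - 1)))) (Set.Ioi y) := by
      intro s hs
      have heq : (fun t => Phi κ t y s) =ᶠ[nhds ξ]
          (fun t => (s - y) ^ a * (y - t) ^ b * (s - t) ^ b) :=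
        Filter.Eventually.of_forall fun t => by simp [Phi, ha, hb]
      exact ((L1 a b y s ξ hξy (hξy.trans hs)).congr_of_eventuallyEq heq).deriv
    have heq : (fun s => deriv (fun t => Phi κ t y s) ξ) =ᶠ[nhds z]
        (fun s => (s - y) ^ a * (-(b * (y - ξ) ^ (b - 1) * (s - ξ) ^ b +
          b * (y - ξ) ^ b * (s - ξ) ^ (b - 1)))) :=
      Filter.eventuallyEq_of_mem (isOpen_Ioi.mem_nhds hyz) m1
    rw [heq.deriv_eq]
    exact (L5 a b ξ y z hξz hyz).deriv
  -- ∂y Phi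
  have py : deriv (fun s => Phi κ ξ s z) y
      = (-a * (z - y) ^ (a - 1) * (y - ξ) ^ b
        + b * (z - y) ^ a * (y - ξ) ^ (b - 1)) * (z - ξ) ^ b := by
    have heq : (fun s => Phi κ ξ s z) =ᶠ[nhds y]
        (fun s => (z - s) ^ a * (s - ξ) ^ b * (z - ξ) ^ b) :=
      Filter.Eventually.of_forall fun s => by simp [Phi, ha, hb]
    exact ((L6 a b ξ y z hξy hyz).congr_of_eventuallyEq heq).deriv
  -- ∂z Phi
  have pz : deriv (fun s => Phi κ ξ y s) z
      = (a * (z - y) ^ (a - 1) * (z - ξ) ^ b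
        + b * (z - y) ^ a * (z - ξ) ^ (b - 1)) * (y - ξ) ^ b := by
    have heq : (fun s => Phi κ ξ y s) =ᶠ[nhds z]
        (fun s => (s - y) ^ a * (y - ξ) ^ b * (s - ξ) ^ b) :=
      Filter.Eventually.of_forall fun s => by simp [Phi, ha, hb]
    exact ((L7 a b ξ y z hξz hyz).congr_of_eventuallyEq heq).deriv
  rw [e2, e0 hξy, my, mz, py, pz]
  simp only [Phi, ← ha, ← hb]
  rw [off1 hw, off1 hu, off2 hu, off3 hu, off1 hv, off2 hv, off3 hv]
  have h1 : (y:ℝ) - ξ ≠ 0 := hu.ne'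
  have h2 : (z:ℝ) - ξ ≠ 0 := hv.ne'
  have h3 : (z:ℝ) - ξ - (y - ξ) ≠ 0 := by
    intro hc; exact hw.ne' (by linarith)
  rw [ha, hb, show z - y = z - ξ - (y - ξ) by ring]
  generalize (z - ξ - (y - ξ)) ^ (2/κ) = W
  generalize (y - ξ) ^ (1 - 8/κ) = B
  generalize (z - ξ) ^ (1 - 8/κ) = D
  set u := y - ξ with hu'
  set v := z - ξ with hv'
  linear_combination (W * B * D) * alg_key κ u v hκne hu.ne' hv.ne' h3
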